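/- Let d ≥ 3, let g be the Green function of simple random walk on ℤ^d with g(x,y) ≤ c_* |y−x|^{2−d}, and set η = (c_* M^d)^{−1} ∧ inf_{L ≥ 1} cap([0,L)^d)/L^{d−2} > 0, where M is a fixed integer. Let B̄ be a box partitioned into M^d subboxes B̂ of equal side. Call B̂ sparse (with respect to a set A ⊆ ℤ^d) if cap(B̂ ∩ A) < η |B̂|^{(d−2)/d}. Then cap(B̄ ∩ A) ≥ (3^d + 1)^{−1} · ∑_{B̂ ⊆ B̄ sparse} cap(B̂ ∩ A). -/

import Mathlib

open scoped Classical

/-- A package for the potential theory of simple random walk on ℤ^d, d ≥ 3: the Green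
function `g`, and for each finite set its equilibrium measure `eqm`, characterized by:
`eqm A` is nonnegative, supported on `A`, its potential `G(eqm A) = ∑ y, g · y * eqm A y`
equals `1` on `A` (the equilibrium potential `h_A = P_·[H_A < ∞]` equals 1 on A) and is
everywhere at most `1`. The capacity is the total mass of the equilibrium measure. -/
structure GreenKit (d : ℕ) where
  g : (Fin d → ℤ) → (Fin d → ℤ) → ℝ
  eqm : Finset (Fin d → ℤ) → (Fin d → ℤ) → ℝ
  g_symm : ∀ x y, g x y = g y x
  g_nonneg : ∀ x y, 0 ≤ g x y
  eqm_nonneg : ∀ A x, 0 ≤ eqm A x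
  eqm_support : ∀ A x, x ∉ A → eqm A x = 0
  pot_eq_one : ∀ A : Finset (Fin d → ℤ), ∀ x ∈ A, ∑ y ∈ A, g x y * eqm A y = 1
  pot_le_one : ∀ (A : Finset (Fin d → ℤ)) (x : Fin d → ℤ), ∑ y ∈ A, g x y * eqm A y ≤ 1

/-- The capacity of a finite set: total mass of its equilibrium measure. -/
def GreenKit.cap {d : ℕ} (κ : GreenKit d) (A : Finset (Fin d → ℤ)) : ℝ :=
  ∑ x ∈ A, κ.eqm A x


/-- The lattice box `x₀ + [0,L)^d ∩ ℤ^d`. -/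
noncomputable def latticeBox (d : ℕ) (x₀ : Fin d → ℤ) (L : ℕ) : Finset (Fin d → ℤ) :=
  Finset.Icc x₀ (fun i => x₀ i + L - 1)

/-- Euclidean norm of an integer vector. -/
noncomputable def enormZ {m : ℕ} (v : Fin m → ℤ) : ℝ :=
  Real.sqrt (∑ i, ((v i : ℝ)) ^ 2)

lemma cap_nonneg {d : ℕ} (κ : GreenKit d) (A : Finset (Fin d → ℤ)) : 0 ≤ κ.cap A :=
  Finset.sum_nonneg fun x _ => κ.eqm_nonneg A x

lemma cap_mono {d : ℕ} (κ : GreenKit d) {S T : Finset (Fin d → ℤ)} (h : S ⊆ T) :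
    κ.cap S ≤ κ.cap T := by
  calc κ.cap S = ∑ x ∈ S, ∑ y ∈ T, κ.eqm S x * (κ.g x y * κ.eqm T y) := by
        refine Finset.sum_congr rfl fun x hx => ?_
        rw [← Finset.mul_sum, κ.pot_eq_one T x (h hx), mul_one]
    _ = ∑ y ∈ T, ∑ x ∈ S, κ.eqm S x * (κ.g x y * κ.eqm T y) := Finset.sum_comm
    _ = ∑ y ∈ T, κ.eqm T y * ∑ x ∈ S, κ.g y x * κ.eqm S x := by
        refine Finset.sum_congr rfl fun y _ => ?_
        rw [Finset.mul_sum]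
        refine Finset.sum_congr rfl fun x _ => ?_
        rw [κ.g_symm y x]; ring
    _ ≤ ∑ y ∈ T, κ.eqm T y * 1 :=
        Finset.sum_le_sum fun y _ =>
          mul_le_mul_of_nonneg_left (κ.pot_le_one S y) (κ.eqm_nonneg T y)
    _ = κ.cap T := by simp [GreenKit.cap]

lemma mass_le {d : ℕ} (κ : GreenKit d) (S : Finset (Fin d → ℤ)) (ν : (Fin d → ℤ) → ℝ)
    (hν : ∀ x, 0 ≤ ν x) (C : ℝ)
    (hpot : ∀ y ∈ S, ∑ x ∈ S, κ.g y x * ν x ≤ C) :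
    ∑ x ∈ S, ν x ≤ C * κ.cap S := by
  calc ∑ x ∈ S, ν x = ∑ x ∈ S, ∑ y ∈ S, ν x * (κ.g x y * κ.eqm S y) := by
        refine Finset.sum_congr rfl fun x hx => ?_
        rw [← Finset.mul_sum, κ.pot_eq_one S x hx, mul_one]
    _ = ∑ y ∈ S, ∑ x ∈ S, ν x * (κ.g x y * κ.eqm S y) := Finset.sum_comm
    _ = ∑ y ∈ S, κ.eqm S y * ∑ x ∈ S, κ.g y x * ν x := by
        refine Finset.sum_congr rfl fun y _ => ?_
        rw [Finset.mul_sum]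
        refine Finset.sum_congr rfl fun x _ => ?_
        rw [κ.g_symm y x]; ring
    _ ≤ ∑ y ∈ S, κ.eqm S y * C :=
        Finset.sum_le_sum fun y hy =>
          mul_le_mul_of_nonneg_left (hpot y hy) (κ.eqm_nonneg S y)
    _ = C * κ.cap S := by rw [GreenKit.cap, ← Finset.sum_mul, mul_comm]

/-- near-additivity of capacity over sparse subboxes.  With
`η = (c_* M^d)⁻¹ ∧ inf_{L≥1} cap([0,L)^d)/L^{d−2}`, if the box `B̄` of side `ML` is
partitioned into the `M^d` subboxes `B̂_w` of side `L`, and `B̂_w` is called sparse when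
`cap(B̂_w ∩ A) < η |B̂_w|^{(d−2)/d}`, then
`cap(B̄ ∩ A) ≥ (3^d+1)⁻¹ ∑_{B̂ sparse} cap(B̂ ∩ A)`. -/
theorem stmt_6 (d M : ℕ) (hd : 3 ≤ d) (hM : 1 ≤ M) (κ : GreenKit d)
    (cstar : ℝ) (hcstar : 0 < cstar)
    (hg : ∀ x y, x ≠ y → κ.g x y ≤ cstar * enormZ (y - x) ^ (-((d : ℝ) - 2)))
    (η : ℝ)
    (hη : η = min ((cstar * (M : ℝ) ^ d)⁻¹)
      (sInf {r : ℝ | ∃ L : ℕ, 1 ≤ L ∧ r = κ.cap (latticeBox d 0 L) / (L : ℝ) ^ (d - 2)}))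
    (hηpos : 0 < η)
    (L : ℕ) (hL : 1 ≤ L) (z : Fin d → ℤ) (A : Finset (Fin d → ℤ)) :
    ((3 : ℝ) ^ d + 1)⁻¹ *
        ∑ w : Fin d → Fin M,
          (if κ.cap ((latticeBox d (fun i => z i + (w i : ℤ) * L) L) ∩ A) <
              η * ((L : ℝ) ^ d) ^ (((d : ℝ) - 2) / d)
           then κ.cap ((latticeBox d (fun i => z i + (w i : ℤ) * L) L) ∩ A) else 0)
      ≤ κ.cap ((latticeBox d z (M * L)) ∩ A) := by
  have hLpos : (0:ℝ) < L := by exact_mod_cast hL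
  have hdpos : (0:ℝ) < d := by positivity
  -- the exponent identity
  have hexp : ((L : ℝ) ^ d) ^ (((d : ℝ) - 2) / d) = (L : ℝ) ^ ((d : ℝ) - 2) := by
    rw [← Real.rpow_natCast (L:ℝ) d, ← Real.rpow_mul hLpos.le]
    congr 1
    field_simp
  -- η bound
  have hη1 : η ≤ (cstar * (M : ℝ) ^ d)⁻¹ := hη ▸ min_le_left _ _
  -- abbreviations
  set B : (Fin d → Fin M) → Finset (Fin d → ℤ) :=
    fun w => (latticeBox d (fun i => z i + (w i : ℤ) * L) L) ∩ A with hBdef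
  set Sp : Finset (Fin d → Fin M) :=
    Finset.univ.filter (fun w => κ.cap (B w) < η * ((L : ℝ) ^ d) ^ (((d : ℝ) - 2) / d))
    with hSp
  set S : Finset (Fin d → ℤ) := Sp.biUnion B with hSdef
  have hBS : ∀ w ∈ Sp, B w ⊆ S := fun w hw => Finset.subset_biUnion_of_mem B hw
  -- membership in a subbox
  have memBox : ∀ (w : Fin d → Fin M) (t : Fin d → ℤ), t ∈ B w →
      ∀ i, z i + (w i : ℤ) * L ≤ t i ∧ t i ≤ z i + (w i : ℤ) * L + L - 1 := by
    intro w t ht i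
    rw [hBdef] at ht
    have ht' := Finset.mem_of_mem_inter_left ht
    rw [latticeBox, Finset.mem_Icc] at ht'
    exact ⟨ht'.1 i, ht'.2 i⟩
  -- subboxes lie in the big box
  have hsub : ∀ w : Fin d → Fin M, B w ⊆ (latticeBox d z (M * L)) ∩ A := by
    intro w t ht
    have h1 := memBox w t ht
    have ht2 := Finset.mem_of_mem_inter_right ht
    refine Finset.mem_inter.2 ⟨?_, ht2⟩
    rw [latticeBox, Finset.mem_Icc]
    have hw0 : ∀ i, (0:ℤ) ≤ (w i : ℤ) * L := fun i => by positivity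
    have hwM : ∀ i, ((w i : ℤ) + 1) * L ≤ (M : ℤ) * L := by
      intro i
      have : (w i : ℤ) + 1 ≤ M := by exact_mod_cast (w i).isLt
      exact mul_le_mul_of_nonneg_right this (by positivity)
    constructor <;> intro i
    · have h2 := (h1 i).1
      have h3 := hw0 i
      linarith
    · have h2 := (h1 i).2
      have h3 := hwM i
      push_cast at h3 ⊢
      linarith
  have hSsub : S ⊆ (latticeBox d z (M * L)) ∩ A :=
    Finset.biUnion_subset.2 fun w _ => hsub w
  -- total mass of ν equals sum of capacities
  have hmass : ∑ x ∈ S, (∑ w ∈ Sp, κ.eqm (B w) x) = ∑ w ∈ Sp, κ.cap (B w) := by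
    rw [Finset.sum_comm]
    refine Finset.sum_congr rfl fun w hw => ?_
    rw [GreenKit.cap]
    exact (Finset.sum_subset (hBS w hw) fun x _ hx => κ.eqm_support _ _ hx).symm
  -- the potential bound on S
  have hpot : ∀ x ∈ S, ∑ y ∈ S, κ.g x y * (∑ w ∈ Sp, κ.eqm (B w) y) ≤ (3:ℝ) ^ d + 1 := by
    intro x hx
    obtain ⟨w₀, hw₀, hxw₀⟩ := Finset.mem_biUnion.1 hx
    have hrw : ∑ y ∈ S, κ.g x y * (∑ w ∈ Sp, κ.eqm (B w) y)
        = ∑ w ∈ Sp, ∑ y ∈ B w, κ.g x y * κ.eqm (B w) y := by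
      calc ∑ y ∈ S, κ.g x y * (∑ w ∈ Sp, κ.eqm (B w) y)
          = ∑ y ∈ S, ∑ w ∈ Sp, κ.g x y * κ.eqm (B w) y := by
            refine Finset.sum_congr rfl fun y _ => Finset.mul_sum _ _ _
        _ = ∑ w ∈ Sp, ∑ y ∈ S, κ.g x y * κ.eqm (B w) y := Finset.sum_comm
        _ = ∑ w ∈ Sp, ∑ y ∈ B w, κ.g x y * κ.eqm (B w) y := by
            refine Finset.sum_congr rfl fun w hw => ?_
            exact (Finset.sum_subset (hBS w hw) fun y _ hy => by
              rw [κ.eqm_support _ _ hy, mul_zero]).symm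
    rw [hrw]
    -- split into near and far boxes
    set p : (Fin d → Fin M) → Prop := fun w => ∀ i, ((w i : ℤ) - (w₀ i : ℤ)).natAbs ≤ 1 with hp
    rw [← Finset.sum_filter_add_sum_filter_not Sp p]
    have hterm_nonneg : ∀ w, 0 ≤ ∑ y ∈ B w, κ.g x y * κ.eqm (B w) y :=
      fun w => Finset.sum_nonneg fun y _ => mul_nonneg (κ.g_nonneg x y) (κ.eqm_nonneg _ y)
    -- near part
    have hnear : ∑ w ∈ Sp.filter p, (∑ y ∈ B w, κ.g x y * κ.eqm (B w) y) ≤ (3:ℝ) ^ d := by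
      have hcard : (Sp.filter p).card ≤ 3 ^ d := by
        have hinj : Set.InjOn (fun (w : Fin d → Fin M) => fun i => (w i : ℤ))
            (Sp.filter p) := by
          intro a _ b _ hab
          funext i
          have h : ((a i : ℤ)) = ((b i : ℤ)) := congrFun hab i
          exact Fin.ext (by exact_mod_cast h)
        have hmaps : ∀ w ∈ Sp.filter p, (fun i => (w i : ℤ)) ∈
            Fintype.piFinset (fun i => Finset.Icc ((w₀ i : ℤ) - 1) ((w₀ i : ℤ) + 1)) := by
          intro w hw
          rw [Fintype.mem_piFinset]
          intro i
          have := (Finset.mem_filter.1 hw).2 i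
          rw [Finset.mem_Icc]
          omega
        have := Finset.card_le_card_of_injOn _ hmaps hinj
        calc (Sp.filter p).card
            ≤ (Fintype.piFinset (fun i => Finset.Icc ((w₀ i : ℤ) - 1) ((w₀ i : ℤ) + 1))).card :=
              this
          _ = 3 ^ d := by
              rw [Fintype.card_piFinset]
              have : ∀ i : Fin d, (Finset.Icc ((w₀ i : ℤ) - 1) ((w₀ i : ℤ) + 1)).card = 3 := by
                intro i; rw [Int.card_Icc]; omega
              simp [this]
      calc ∑ w ∈ Sp.filter p, (∑ y ∈ B w, κ.g x y * κ.eqm (B w) y)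
          ≤ ∑ w ∈ Sp.filter p, (1:ℝ) :=
            Finset.sum_le_sum fun w _ => κ.pot_le_one (B w) x
        _ = ((Sp.filter p).card : ℝ) := by simp
        _ ≤ (3:ℝ) ^ d := by exact_mod_cast Nat.cast_le.2 hcard
    -- far part
    have hfar : ∑ w ∈ Sp.filter (fun w => ¬ p w), (∑ y ∈ B w, κ.g x y * κ.eqm (B w) y)
        ≤ 1 := by
      have hgfar : ∀ w ∈ Sp.filter (fun w => ¬ p w), ∀ y ∈ B w,
          κ.g x y ≤ cstar * (L : ℝ) ^ (-((d : ℝ) - 2)) := by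
        intro w hw y hy
        obtain ⟨i, hi⟩ := not_forall.1 (Finset.mem_filter.1 hw).2
        have hxi := memBox w₀ x hxw₀ i
        have hyi := memBox w y hy i
        -- separation in coordinate i
        have hsep : (L : ℤ) ≤ |y i - x i| := by
          rcases le_or_gt ((w₀ i : ℤ) + 2) (w i : ℤ) with hcase | hcase
          · have hmul : ((w₀ i : ℤ) + 2) * L ≤ (w i : ℤ) * L :=
              mul_le_mul_of_nonneg_right hcase (by positivity)
            have : (L : ℤ) ≤ y i - x i := by nlinarith [hxi.1, hxi.2, hyi.1, hyi.2]
            exact this.trans (le_abs_self _)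
          · have hcase2 : (w i : ℤ) + 2 ≤ (w₀ i : ℤ) := by omega
            have hmul : ((w i : ℤ) + 2) * L ≤ (w₀ i : ℤ) * L :=
              mul_le_mul_of_nonneg_right hcase2 (by positivity)
            have : (L : ℤ) ≤ x i - y i := by nlinarith [hxi.1, hxi.2, hyi.1, hyi.2]
            calc (L : ℤ) ≤ x i - y i := this
              _ ≤ |y i - x i| := by rw [abs_sub_comm]; exact le_abs_self _
        have hxy : x ≠ y := by
          intro h; rw [h] at hsep; simp at hsep; omega
        have hnorm : (L : ℝ) ≤ enormZ (y - x) := by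
          have h1 : |((y i : ℝ) - (x i : ℝ))| ≤ enormZ (y - x) := by
            rw [enormZ]
            have h2 : ((y i : ℝ) - (x i : ℝ)) ^ 2 ≤ ∑ j, (((y - x) j : ℝ)) ^ 2 := by
              have := Finset.single_le_sum
                (f := fun j => (((y - x) j : ℝ)) ^ 2)
                (fun j _ => by positivity) (Finset.mem_univ i)
              simpa [Pi.sub_apply] using this
            calc |((y i : ℝ) - (x i : ℝ))| = Real.sqrt (((y i : ℝ) - (x i : ℝ)) ^ 2) :=
                  (Real.sqrt_sq_eq_abs _).symm
              _ ≤ _ := Real.sqrt_le_sqrt h2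
          have h3 : (L : ℝ) ≤ |((y i : ℝ) - (x i : ℝ))| := by
            have h4 : ((L : ℤ) : ℝ) ≤ ((|y i - x i| : ℤ) : ℝ) := Int.cast_le.2 hsep
            rw [Int.cast_abs] at h4
            push_cast at h4
            exact h4
          linarith
        calc κ.g x y ≤ cstar * enormZ (y - x) ^ (-((d : ℝ) - 2)) := hg x y hxy
          _ ≤ cstar * (L : ℝ) ^ (-((d : ℝ) - 2)) := by
            refine mul_le_mul_of_nonneg_left ?_ hcstar.le
            refine Real.rpow_le_rpow_of_nonpos hLpos hnorm ?_
            have : (3:ℝ) ≤ d := by exact_mod_cast hd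
            linarith
      have hterm : ∀ w ∈ Sp.filter (fun w => ¬ p w),
          ∑ y ∈ B w, κ.g x y * κ.eqm (B w) y ≤ cstar * η := by
        intro w hw
        have hcapw : κ.cap (B w) ≤ η * (L : ℝ) ^ ((d : ℝ) - 2) := by
          have := (Finset.mem_filter.1 (Finset.mem_filter.1 hw).1).2
          rw [hexp] at this
          exact this.le
        have hC : (0:ℝ) ≤ cstar * (L : ℝ) ^ (-((d : ℝ) - 2)) := by positivity
        calc ∑ y ∈ B w, κ.g x y * κ.eqm (B w) y
            ≤ ∑ y ∈ B w, (cstar * (L : ℝ) ^ (-((d : ℝ) - 2))) * κ.eqm (B w) y :=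
              Finset.sum_le_sum fun y hy =>
                mul_le_mul_of_nonneg_right (hgfar w hw y hy) (κ.eqm_nonneg _ y)
          _ = (cstar * (L : ℝ) ^ (-((d : ℝ) - 2))) * κ.cap (B w) := by
              rw [GreenKit.cap, Finset.mul_sum]
          _ ≤ (cstar * (L : ℝ) ^ (-((d : ℝ) - 2))) * (η * (L : ℝ) ^ ((d : ℝ) - 2)) :=
              mul_le_mul_of_nonneg_left hcapw hC
          _ = cstar * η * ((L : ℝ) ^ (-((d : ℝ) - 2)) * (L : ℝ) ^ ((d : ℝ) - 2)) := by
              ring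
          _ = cstar * η := by
              rw [← Real.rpow_add hLpos, neg_add_cancel, Real.rpow_zero, mul_one]
      have hcard2 : ((Sp.filter (fun w => ¬ p w)).card : ℝ) ≤ (M : ℝ) ^ d := by
        have := Finset.card_le_univ (Sp.filter (fun w => ¬ p w))
        have h2 : Fintype.card (Fin d → Fin M) = M ^ d := by simp
        calc ((Sp.filter (fun w => ¬ p w)).card : ℝ)
            ≤ (Fintype.card (Fin d → Fin M) : ℝ) := by exact_mod_cast this
          _ = (M : ℝ) ^ d := by rw [h2]; push_cast; ring
      have hMpow : (0:ℝ) < (M : ℝ) ^ d := by positivity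
      calc ∑ w ∈ Sp.filter (fun w => ¬ p w), (∑ y ∈ B w, κ.g x y * κ.eqm (B w) y)
          ≤ ∑ w ∈ Sp.filter (fun w => ¬ p w), cstar * η := Finset.sum_le_sum hterm
        _ = ((Sp.filter (fun w => ¬ p w)).card : ℝ) * (cstar * η) := by
            rw [Finset.sum_const, nsmul_eq_mul]
        _ ≤ (M : ℝ) ^ d * (cstar * η) :=
            mul_le_mul_of_nonneg_right hcard2 (by positivity)
        _ ≤ (M : ℝ) ^ d * (cstar * (cstar * (M : ℝ) ^ d)⁻¹) := by
            refine mul_le_mul_of_nonneg_left ?_ hMpow.le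
            exact mul_le_mul_of_nonneg_left hη1 hcstar.le
        _ = 1 := by field_simp
    linarith
  -- apply the mass lemma
  have hmain : ∑ w ∈ Sp, κ.cap (B w) ≤ ((3:ℝ) ^ d + 1) * κ.cap S := by
    rw [← hmass]
    exact mass_le κ S (fun x => ∑ w ∈ Sp, κ.eqm (B w) x)
      (fun x => Finset.sum_nonneg fun w _ => κ.eqm_nonneg _ x) _ hpot
  have h3pos : (0:ℝ) < (3:ℝ) ^ d + 1 := by positivity
  have hfinal : ((3:ℝ) ^ d + 1)⁻¹ * ∑ w ∈ Sp, κ.cap (B w) ≤ κ.cap S := by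
    rw [inv_mul_le_iff₀ h3pos]
    linarith [hmain]
  calc ((3 : ℝ) ^ d + 1)⁻¹ *
        ∑ w : Fin d → Fin M,
          (if κ.cap ((latticeBox d (fun i => z i + (w i : ℤ) * L) L) ∩ A) <
              η * ((L : ℝ) ^ d) ^ (((d : ℝ) - 2) / d)
           then κ.cap ((latticeBox d (fun i => z i + (w i : ℤ) * L) L) ∩ A) else 0)
      = ((3 : ℝ) ^ d + 1)⁻¹ * ∑ w ∈ Sp, κ.cap (B w) := by
        rw [hSp, Finset.sum_filter]
    _ ≤ κ.cap S := hfinal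
    _ ≤ κ.cap ((latticeBox d z (M * L)) ∩ A) := cap_mono κ hSsub
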